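/- Let M be a simple matroid and k a finite commutative ring. Let σ ∈ k^M be the constant function 1, and define the cocycle space Z_k(M) = {τ ∈ k^M : for each rank-2 flat X and each v ∈ X, ∑_{u∈X} τ_u = |X|·τ_v}. Let Z'_k(M) be the functions whose restriction to every rank-2 flat is constant or bijective. If the sum of all elements of k is 0, then Z'_k(M) ⊆ Z_k(M); otherwise Z'_k(M) ∩ Z_k(M) equals the set of constant functions. -/

import Mathlib

open Set


/-- A matroid is simple if every subset of its ground set of size at most two is
independent. -/
def Matroid.IsSimpleMatroid {α : Type} (M : Matroid α) : Prop :=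
  ∀ S : Set α, S ⊆ M.E → S.ncard ≤ 2 → M.Indep S

/-- A line (rank-2 flat) of a matroid: a flat having a basis of size two. -/
def Matroid.IsLine {α : Type} (M : Matroid α) (F : Set α) : Prop :=
  M.IsFlat F ∧ ∃ I, M.IsBasis I F ∧ I.ncard = 2

lemma card_mul_eq_zero (K : Type) [CommRing K] [Fintype K] (x : K) :
    (Fintype.card K : K) * x = 0 := by
  have h1 : ∑ a : K, (a + x) = ∑ a : K, a :=
    Fintype.sum_equiv (Equiv.addRight x) _ _ (fun a => rfl)
  have h2 : ∑ a : K, (a + x) = (∑ a : K, a) + (Fintype.card K : K) * x := by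
    rw [Finset.sum_add_distrib, Finset.sum_const, Finset.card_univ, nsmul_eq_mul]
  rw [h2] at h1
  nth_rewrite 2 [← add_zero (∑ a : K, a)] at h1; exact add_left_cancel h1

lemma sum_bijOn (α K : Type) [Fintype α] [CommRing K] [Fintype K]
    (τ : α → K) (X : Set α) (h : Set.BijOn τ X Set.univ) :
    ∑ᶠ u ∈ X, τ u = ∑ x : K, x := by
  classical
  have hX : X.Finite := Set.toFinite X
  rw [finsum_mem_eq_finite_toFinset_sum τ hX]
  have hinj : ∀ a ∈ hX.toFinset, ∀ b ∈ hX.toFinset, τ a = τ b → a = b := by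
    intro a ha b hb hab
    exact h.injOn (by simpa using ha) (by simpa using hb) hab
  have := Finset.sum_image (g := τ) (f := fun x : K => x) hinj
  rw [← this]
  have himg : hX.toFinset.image τ = Finset.univ := by
    apply Finset.eq_univ_of_forall
    intro x
    obtain ⟨a, ha, rfl⟩ := h.surjOn (Set.mem_univ x)
    exact Finset.mem_image_of_mem τ (by simpa using ha)
  rw [himg]

lemma ncard_bijOn (α K : Type) [Fintype α] [Fintype K]
    (τ : α → K) (X : Set α) (h : Set.BijOn τ X Set.univ) :
    X.ncard = Fintype.card K := by
  have h1 : (τ '' X).ncard = X.ncard := Set.ncard_image_of_injOn h.injOn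
  rw [h.image_eq] at h1
  rw [← h1, Set.ncard_univ, Nat.card_eq_fintype_card]

lemma sum_const_on (α K : Type) [Fintype α] [CommRing K]
    (τ : α → K) (X : Set α) (a : K) (h : ∀ u ∈ X, τ u = a) :
    ∑ᶠ u ∈ X, τ u = (X.ncard : K) * a := by
  have hX : X.Finite := Set.toFinite X
  rw [finsum_mem_eq_finite_toFinset_sum τ hX]
  rw [Finset.sum_congr rfl (fun u hu => h u (by simpa using hu)), Finset.sum_const,
    nsmul_eq_mul, Set.ncard_eq_toFinset_card X hX]

lemma flat_closure {α : Type} (M : Matroid α) (X : Set α) : M.IsFlat (M.closure X) := by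
  rw [Matroid.closure_def]
  have hne : {F | M.IsFlat F ∧ X ∩ M.E ⊆ F}.Nonempty := ⟨M.E, M.ground_isFlat, inter_subset_right⟩
  rw [sInter_eq_iInter]
  have := hne.coe_sort
  exact Matroid.IsFlat.iInter fun F => F.2.1

lemma line_through {α : Type} [Fintype α] (M : Matroid α) (hE : M.E = Set.univ)
    (hs : M.IsSimpleMatroid) {u v : α} (huv : u ≠ v) :
    M.IsLine (M.closure {u, v}) ∧ u ∈ M.closure {u, v} ∧ v ∈ M.closure {u, v} := by
  have hsub : ({u, v} : Set α) ⊆ M.E := by rw [hE]; exact subset_univ _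
  have hcard : ({u, v} : Set α).ncard = 2 := Set.ncard_pair huv
  have hInd : M.Indep {u, v} := hs _ hsub (by rw [hcard])
  have hcl := M.subset_closure {u, v} hsub
  exact ⟨⟨flat_closure M _, ⟨{u, v}, hInd.isBasis_closure, hcard⟩⟩,
    hcl (by simp), hcl (by simp)⟩


/-- Let `M` be a simple matroid and `K` a finite commutative ring.  Let `Z_K(M)` be
the cocycle space: functions `τ` such that for every rank-2 flat `X` and `v ∈ X`,
`∑_{u ∈ X} τ u = |X| · τ v`; and let `Z'_K(M)` be the special cocycles: functions
whose restriction to every rank-2 flat is constant or bijective.  If `Σ(K) = 0`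
then `Z'_K(M) ⊆ Z_K(M)`; otherwise `Z'_K(M) ∩ Z_K(M)` is the set of constant
functions. -/
theorem special_cocycles_vs_cocycles (α : Type) [Fintype α]
    (M : Matroid α) (hE : M.E = Set.univ) (hs : M.IsSimpleMatroid)
    (K : Type) [CommRing K] [Fintype K] :
    ((∑ x : K, x) = 0 →
      {τ : α → K | ∀ X : Set α, M.IsLine X →
          ((∀ u ∈ X, ∀ v ∈ X, τ u = τ v) ∨ Set.BijOn τ X Set.univ)} ⊆
        {τ : α → K | ∀ X : Set α, M.IsLine X → ∀ v ∈ X,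
          (∑ᶠ u ∈ X, τ u) = (X.ncard : K) * τ v}) ∧
    ((∑ x : K, x) ≠ 0 →
      {τ : α → K | ∀ X : Set α, M.IsLine X →
          ((∀ u ∈ X, ∀ v ∈ X, τ u = τ v) ∨ Set.BijOn τ X Set.univ)} ∩
        {τ : α → K | ∀ X : Set α, M.IsLine X → ∀ v ∈ X,
          (∑ᶠ u ∈ X, τ u) = (X.ncard : K) * τ v} =
        {τ : α → K | ∃ a : K, ∀ u, τ u = a}) := by
  classical
  constructor
  · intro hS τ hτ X hX v hv
    rcases hτ X hX with hconst | hbij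
    · exact sum_const_on α K τ X (τ v) (fun u hu => hconst u hu v hv)
    · rw [sum_bijOn α K τ X hbij, hS, ncard_bijOn α K τ X hbij,
        card_mul_eq_zero]
  · intro hS
    ext τ
    simp only [Set.mem_inter_iff, Set.mem_setOf_eq]
    constructor
    · rintro ⟨h1, h2⟩
      have hconst : ∀ X : Set α, M.IsLine X → ∀ u ∈ X, ∀ v ∈ X, τ u = τ v := by
        intro X hX
        rcases h1 X hX with hc | hbij
        · exact hc
        · exfalso
          have hcardpos : 0 < X.ncard := by
            rw [ncard_bijOn α K τ X hbij]; exact Fintype.card_pos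
          obtain ⟨v, hv⟩ := Set.nonempty_of_ncard_ne_zero hcardpos.ne'
          have := h2 X hX v hv
          rw [sum_bijOn α K τ X hbij, ncard_bijOn α K τ X hbij,
            card_mul_eq_zero] at this
          exact hS this
      cases isEmpty_or_nonempty α with
      | inl h => exact ⟨0, fun u => (IsEmpty.false u).elim⟩
      | inr h =>
        obtain ⟨u₀⟩ := h
        refine ⟨τ u₀, fun v => ?_⟩
        by_cases hvu : v = u₀
        · rw [hvu]
        · obtain ⟨hL, hv, hu⟩ := line_through M hE hs hvu
          exact hconst _ hL _ hv _ hu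
    · rintro ⟨a, ha⟩
      refine ⟨fun X _ => Or.inl (fun u _ v _ => by rw [ha, ha]), fun X hX v hv => ?_⟩
      rw [ha v]
      exact sum_const_on α K τ X a (fun u _ => ha u)
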